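/- Let G be a triangle-free finite simple graph on 10 vertices with two adjacent vertices a and b of degree 5 such that every other vertex has degree 4. Then a and b have no common neighbor, every vertex other than a and b is adjacent to exactly one of a and b, the induced subgraph G−a,b is 3-regular, and every edge of G−a,b joins a neighbor of a to a neighbor of b (so G−a,b is bipartite with parts N(a)∖{b} and N(b)∖{a}, each of size 4). -/

import Mathlib

open scoped Classical

/-- Let G be a triangle-free finite simple graph on 10 vertices
with two adjacent vertices a and b of degree 5 such that every other vertex has
degree 4. Then a and b have no common neighbor, every other vertex is adjacent
to exactly one of a and b, the induced subgraph G−a,b is 3-regular, and every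
edge of G−a,b joins a neighbor of a to a neighbor of b. -/
theorem stmt_16 {V : Type*} [Fintype V] (G : SimpleGraph V)
    (htf : G.CliqueFree 3) (hV : Fintype.card V = 10)
    (a b : V) (hab : a ≠ b) (hadj : G.Adj a b)
    (hda : G.degree a = 5) (hdb : G.degree b = 5)
    (hother : ∀ v : V, v ≠ a → v ≠ b → G.degree v = 4) :
    (∀ c : V, ¬ (G.Adj a c ∧ G.Adj b c)) ∧
    (∀ v : V, v ≠ a → v ≠ b → Xor' (G.Adj a v) (G.Adj b v)) ∧
    (∀ x : ({a, b}ᶜ : Set V), (G.induce ({a, b}ᶜ : Set V)).degree x = 3) ∧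
    (∀ x y : ({a, b}ᶜ : Set V), (G.induce ({a, b}ᶜ : Set V)).Adj x y →
      (G.Adj a x.1 ∧ G.Adj b y.1) ∨ (G.Adj b x.1 ∧ G.Adj a y.1)) := by
  classical
  have tri : ∀ x y z : V, G.Adj x y → G.Adj x z → G.Adj y z → False := by
    intro x y z h1 h2 h3
    exact htf {x, y, z} (SimpleGraph.is3Clique_triple_iff.mpr ⟨h1, h2, h3⟩)
  have hnc : ∀ c : V, ¬ (G.Adj a c ∧ G.Adj b c) :=
    fun c ⟨h1, h2⟩ => tri a b c hadj h1 h2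
  have hdisj : Disjoint (G.neighborFinset a) (G.neighborFinset b) := by
    rw [Finset.disjoint_left]
    intro c hca hcb
    rw [SimpleGraph.mem_neighborFinset] at hca hcb
    exact hnc c ⟨hca, hcb⟩
  have huniv : G.neighborFinset a ∪ G.neighborFinset b = Finset.univ := by
    apply Finset.eq_univ_of_card
    rw [Finset.card_union_of_disjoint hdisj, SimpleGraph.card_neighborFinset_eq_degree,
      SimpleGraph.card_neighborFinset_eq_degree, hda, hdb, hV]
  have hcover : ∀ v : V, G.Adj a v ∨ G.Adj b v := by
    intro v
    have : v ∈ G.neighborFinset a ∪ G.neighborFinset b := by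
      rw [huniv]; exact Finset.mem_univ v
    simpa [SimpleGraph.mem_neighborFinset] using this
  have hxor : ∀ v : V, v ≠ a → v ≠ b → Xor' (G.Adj a v) (G.Adj b v) := by
    intro v _ _
    rcases hcover v with h | h
    · exact Or.inl ⟨h, fun h' => hnc v ⟨h, h'⟩⟩
    · exact Or.inr ⟨h, fun h' => hnc v ⟨h', h⟩⟩
  refine ⟨hnc, hxor, ?_, ?_⟩
  · intro x
    obtain ⟨x, hx⟩ := x
    have hxa : x ≠ a := by intro h; apply hx; left; exact h
    have hxb : x ≠ b := by intro h; apply hx; right; exact h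
    have key : ((G.induce ({a, b}ᶜ : Set V)).neighborFinset ⟨x, hx⟩).card = 3 := by
      have himg : ((G.induce ({a, b}ᶜ : Set V)).neighborFinset ⟨x, hx⟩).image
          (Subtype.val) = (G.neighborFinset x) \ {a, b} := by
        ext y
        simp only [Finset.mem_image, SimpleGraph.mem_neighborFinset, Finset.mem_sdiff,
          Finset.mem_insert, Finset.mem_singleton]
        constructor
        · rintro ⟨⟨z, hz⟩, hadjz, rfl⟩
          refine ⟨hadjz, ?_⟩
          intro h
          apply hz
          rcases h with h | h
          · left; exact h
          · right; exact h
        · rintro ⟨hadjy, hy⟩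
          have hy' : y ∈ ({a, b}ᶜ : Set V) := by
            intro h; apply hy; rcases h with h | h
            · left; exact h
            · right; exact h
          exact ⟨⟨y, hy'⟩, hadjy, rfl⟩
      have hcard : ((G.neighborFinset x) \ {a, b}).card = 3 := by
        rcases hxor x hxa hxb with ⟨ha', hb'⟩ | ⟨hb', ha'⟩
        · have : (G.neighborFinset x) \ {a, b} = (G.neighborFinset x).erase a := by
            ext y
            simp only [Finset.mem_sdiff, Finset.mem_erase, Finset.mem_insert,
              Finset.mem_singleton, SimpleGraph.mem_neighborFinset]
            constructor
            · rintro ⟨h1, h2⟩; exact ⟨fun h => h2 (Or.inl h), h1⟩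
            · rintro ⟨h1, h2⟩
              refine ⟨h2, ?_⟩
              rintro (rfl | rfl)
              · exact h1 rfl
              · exact hb' h2.symm
          rw [this, Finset.card_erase_of_mem, SimpleGraph.card_neighborFinset_eq_degree,
            hother x hxa hxb]
          rw [SimpleGraph.mem_neighborFinset]; exact ha'.symm
        · have : (G.neighborFinset x) \ {a, b} = (G.neighborFinset x).erase b := by
            ext y
            simp only [Finset.mem_sdiff, Finset.mem_erase, Finset.mem_insert,
              Finset.mem_singleton, SimpleGraph.mem_neighborFinset]
            constructor
            · rintro ⟨h1, h2⟩; exact ⟨fun h => h2 (Or.inr h), h1⟩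
            · rintro ⟨h1, h2⟩
              refine ⟨h2, ?_⟩
              rintro (rfl | rfl)
              · exact ha' h2.symm
              · exact h1 rfl
          rw [this, Finset.card_erase_of_mem, SimpleGraph.card_neighborFinset_eq_degree,
            hother x hxa hxb]
          rw [SimpleGraph.mem_neighborFinset]; exact hb'.symm
      rw [← hcard, ← himg, Finset.card_image_of_injective _ Subtype.val_injective]
    rw [← key]
    rfl
  · rintro ⟨x, hx⟩ ⟨y, hy⟩ hxy
    have hxa : x ≠ a := fun h => hx (Or.inl h)
    have hxb : x ≠ b := fun h => hx (Or.inr h)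
    have hya : y ≠ a := fun h => hy (Or.inl h)
    have hyb : y ≠ b := fun h => hy (Or.inr h)
    have hxy' : G.Adj x y := hxy
    rcases hxor x hxa hxb with ⟨hax, hbx⟩ | ⟨hbx, hax⟩
    · rcases hxor y hya hyb with ⟨hay, _⟩ | ⟨hby, _⟩
      · exact absurd (tri a x y hax hay hxy') (by simp)
      · exact Or.inl ⟨hax, hby⟩
    · rcases hxor y hya hyb with ⟨hay, _⟩ | ⟨hby, _⟩
      · exact Or.inr ⟨hbx, hay⟩
      · exact absurd (tri b x y hbx hby hxy') (by simp)
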